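/- Let $r_1, r_2 > 0$, $\epsilon > 0$, $r_0 = \min\{r_1,r_2\}/2$, $g_j(x_1) = r_j - \sqrt{r_j^2 - x_1^2}$, $\delta(x_1) = 2\epsilon + g_1(x_1) + g_2(x_1)$, and $\tilde u(\mathbf{x}) = (\lambda_1 - \lambda_2)\frac{x_2+\epsilon+g_2(x_1)}{\delta(x_1)} + \lambda_2$ on $\Omega_{r_0} = \{(x_1,x_2) : |x_1| < r_0,\ -\epsilon - g_2(x_1) < x_2 < \epsilon + g_1(x_1)\}$. Then there is a constant $C$ independent of $r_1, r_2, \epsilon, \lambda_1, \lambda_2$ such that $\int_{\Omega_{r_0}}|\partial_{x_1}\tilde u|^2\,d\mathbf{x} \leq C\,\frac{r_0}{\min\{r_1,r_2\}}\,|\lambda_1 - \lambda_2|^2$. -/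

import Mathlib

open MeasureTheory

namespace Stmt16

lemma sqrt_hasDeriv (r t : ℝ) (h : t^2 < r^2) :
    HasDerivAt (fun x : ℝ => Real.sqrt (r^2 - x^2)) (-t / Real.sqrt (r^2 - t^2)) t := by
  have h0 : (0:ℝ) < r^2 - t^2 := by linarith
  have hs : 0 < Real.sqrt (r^2 - t^2) := Real.sqrt_pos.2 h0
  have h1 : HasDerivAt (fun x : ℝ => r^2 - x^2) (-(2*t)) t := by
    simpa using ((hasDerivAt_pow 2 t).const_sub (r^2))
  have h2 := (Real.hasDerivAt_sqrt h0.ne').comp t h1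
  refine h2.congr_deriv ?_
  field_simp

noncomputable def sq (r t : ℝ) : ℝ := Real.sqrt (r^2 - t^2)

noncomputable def DD (r1 r2 ε t : ℝ) : ℝ := 2*ε + (r1 - sq r1 t) + (r2 - sq r2 t)

noncomputable def dd (r1 r2 t : ℝ) : ℝ := t / sq r1 t + t / sq r2 t

noncomputable def phi (r1 r2 ε lam x2 t : ℝ) : ℝ :=
  lam * (((t / sq r2 t) * DD r1 r2 ε t - (x2 + ε + (r2 - sq r2 t)) * dd r1 r2 t)
    / (DD r1 r2 ε t)^2)

lemma sq_nonneg' (r t : ℝ) : 0 ≤ sq r t := Real.sqrt_nonneg _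

lemma sq_le (r t : ℝ) (hr : 0 ≤ r) : sq r t ≤ r := by
  calc sq r t ≤ Real.sqrt (r^2) := Real.sqrt_le_sqrt (by nlinarith)
  _ = r := Real.sqrt_sq hr

lemma DD_pos (r1 r2 ε t : ℝ) (hr1 : 0 ≤ r1) (hr2 : 0 ≤ r2) (hε : 0 < ε) :
    0 < DD r1 r2 ε t := by
  have := sq_le r1 t hr1
  have := sq_le r2 t hr2
  unfold DD; linarith

lemma deriv_eq (r1 r2 ε lam lam2 x2 t : ℝ) (hr1 : 0 < r1) (hr2 : 0 < r2) (hε : 0 < ε)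
    (h1 : t^2 < r1^2) (h2 : t^2 < r2^2) :
    deriv (fun t : ℝ => lam * ((x2 + ε + (r2 - Real.sqrt (r2 ^ 2 - t ^ 2))) /
        (2 * ε + (r1 - Real.sqrt (r1 ^ 2 - t ^ 2))
          + (r2 - Real.sqrt (r2 ^ 2 - t ^ 2)))) + lam2) t
      = phi r1 r2 ε lam x2 t := by
  have hs1 := sqrt_hasDeriv r1 t h1
  have hs2 := sqrt_hasDeriv r2 t h2
  have hN : HasDerivAt (fun t : ℝ => x2 + ε + (r2 - Real.sqrt (r2^2 - t^2)))
      (t / sq r2 t) t := by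
    have := (hs2.const_sub r2).const_add (x2 + ε)
    refine this.congr_deriv ?_
    unfold sq; ring
  have hD : HasDerivAt (fun t : ℝ => 2*ε + (r1 - Real.sqrt (r1^2-t^2))
      + (r2 - Real.sqrt (r2^2-t^2))) (dd r1 r2 t) t := by
    have := ((hs1.const_sub r1).const_add (2*ε)).add (hs2.const_sub r2)
    refine this.congr_deriv ?_
    unfold dd sq; ring
  have hD0 : (2*ε + (r1 - Real.sqrt (r1^2-t^2)) + (r2 - Real.sqrt (r2^2-t^2))) ≠ 0 := by
    have := DD_pos r1 r2 ε t hr1.le hr2.le hε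
    unfold DD sq at this; linarith
  have hQ := hN.div hD hD0
  have hfinal := (hQ.const_mul lam).add_const lam2
  erw [hfinal.deriv]
  unfold phi DD dd sq
  ring

lemma phi_sq_le (r1 r2 ε lam x2 t : ℝ) (hr1 : 0 < r1) (hr2 : 0 < r2) (hε : 0 < ε)
    (hlow : -ε - (r2 - sq r2 t) < x2) (hup : x2 < ε + (r1 - sq r1 t)) :
    (phi r1 r2 ε lam x2 t)^2 ≤ 4 * lam^2 * (dd r1 r2 t)^2 / (DD r1 r2 ε t)^2 := by
  set s1 := sq r1 t
  set s2 := sq r2 t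
  set D := DD r1 r2 ε t with hDdef
  set d := dd r1 r2 t
  set N := x2 + ε + (r2 - s2) with hNdef
  have hD : 0 < D := DD_pos r1 r2 ε t hr1.le hr2.le hε
  have hN0 : 0 ≤ N := by rw [hNdef]; linarith
  have hND : N ≤ D := by rw [hNdef, hDdef]; unfold DD; linarith
  have hd : d = t/s1 + t/s2 := rfl
  have hts2 : |t / s2| ≤ |d| := by
    rw [hd]
    rcases le_or_gt 0 t with ht | ht
    · have h1 : 0 ≤ t / s2 := div_nonneg ht (sq_nonneg' r2 t)
      have h2 : 0 ≤ t / s1 := div_nonneg ht (sq_nonneg' r1 t)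
      rw [abs_of_nonneg h1, abs_of_nonneg (by positivity : (0:ℝ) ≤ t/s1 + t/s2)]
      linarith
    · have h1 : t / s2 ≤ 0 := div_nonpos_of_nonpos_of_nonneg ht.le (sq_nonneg' r2 t)
      have h2 : t / s1 ≤ 0 := div_nonpos_of_nonpos_of_nonneg ht.le (sq_nonneg' r1 t)
      rw [abs_of_nonpos h1, abs_of_nonpos (by linarith : t/s1 + t/s2 ≤ 0)]
      linarith
  set X := (t / s2) * D - N * d with hXdef
  have habs : |X| ≤ 2 * D * |d| := by
    calc |X| ≤ |(t/s2) * D| + |N * d| := by rw [hXdef]; exact abs_sub _ _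
    _ = |t/s2| * D + N * |d| := by
        rw [abs_mul, abs_mul, abs_of_nonneg hD.le, abs_of_nonneg hN0]
    _ ≤ |d| * D + D * |d| := by
        have := mul_le_mul_of_nonneg_right hts2 hD.le
        have := mul_le_mul_of_nonneg_right hND (abs_nonneg d)
        nlinarith [abs_nonneg d]
    _ = 2 * D * |d| := by ring
  have hX2 : X^2 ≤ 4 * D^2 * d^2 := by
    have h := mul_self_le_mul_self (abs_nonneg X) habs
    have e1 : |X| * |X| = X^2 := by rw [← abs_mul, abs_mul_self]; ring
    have e2 : (2*D*|d|) * (2*D*|d|) = 4*D^2*d^2 := by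
      have : |d| * |d| = d^2 := by rw [← abs_mul, abs_mul_self]; ring
      nlinarith [this]
    linarith [e1 ▸ e2 ▸ h]
  have hphi : (phi r1 r2 ε lam x2 t)^2 = lam^2 * (X^2 / D^4) := by
    unfold phi
    rw [← hXdef, ← hDdef]
    field_simp
  rw [hphi]
  have hstep : X^2 / D^4 ≤ 4 * d^2 / D^2 := by
    rw [div_le_div_iff₀ (by positivity) (by positivity)]
    nlinarith [hX2, sq_nonneg D]
  calc lam^2 * (X^2 / D^4) ≤ lam^2 * (4 * d^2 / D^2) :=
        mul_le_mul_of_nonneg_left hstep (sq_nonneg lam)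
  _ = 4 * lam^2 * d^2 / D^2 := by ring

set_option maxHeartbeats 1000000 in
lemma key_bound (r1 r2 ε x lam : ℝ) (hr1 : 0 < r1) (hr2 : 0 < r2) (hε : 0 < ε)
    (hx1 : 4*x^2 ≤ r1^2) (hx2 : 4*x^2 ≤ r2^2) :
    (4 * lam^2 * (dd r1 r2 x)^2 / (DD r1 r2 ε x)^2) * DD r1 r2 ε x
      ≤ 24 * lam^2 / min r1 r2 := by
  set s1 := sq r1 x with hs1def
  set s2 := sq r2 x with hs2def
  set D := DD r1 r2 ε x with hDdef
  set d := dd r1 r2 x with hddef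
  set m := min r1 r2 with hmdef
  have hm0 : 0 < m := lt_min hr1 hr2
  have hmr1 : m ≤ r1 := min_le_left _ _
  have hmr2 : m ≤ r2 := min_le_right _ _
  have hD : 0 < D := DD_pos r1 r2 ε x hr1.le hr2.le hε
  have hs1sq : s1^2 = r1^2 - x^2 := Real.sq_sqrt (by nlinarith)
  have hs2sq : s2^2 = r2^2 - x^2 := Real.sq_sqrt (by nlinarith)
  have hs1p : 0 < s1 := Real.sqrt_pos.2 (by nlinarith)
  have hs2p : 0 < s2 := Real.sqrt_pos.2 (by nlinarith)
  have hs1le : s1 ≤ r1 := sq_le r1 x hr1.le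
  have hs2le : s2 ≤ r2 := sq_le r2 x hr2.le
  have hd : d = x/s1 + x/s2 := rfl
  have hDD : D = 2*ε + (r1 - s1) + (r2 - s2) := rfl
  clear_value s1 s2 D d m
  -- key : d^2 * m ≤ 6 * D
  have h1 : x^2/s1^2 ≤ 4*x^2/(3*r1^2) := by
    rw [div_le_div_iff₀ (by positivity) (by positivity)]
    nlinarith [mul_nonneg (sq_nonneg x) (by linarith : (0:ℝ) ≤ r1^2 - 4*x^2)]
  have h2 : x^2/s2^2 ≤ 4*x^2/(3*r2^2) := by
    rw [div_le_div_iff₀ (by positivity) (by positivity)]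
    nlinarith [mul_nonneg (sq_nonneg x) (by linarith : (0:ℝ) ≤ r2^2 - 4*x^2)]
  have h3 : d^2 ≤ 2*(x^2/s1^2) + 2*(x^2/s2^2) := by
    rw [hd]
    have e1 : (x/s1)^2 = x^2/s1^2 := div_pow x s1 2
    have e2 : (x/s2)^2 = x^2/s2^2 := div_pow x s2 2
    nlinarith [e1, e2, sq_nonneg (x/s1 - x/s2)]
  have h4 : 4*x^2/(3*r1^2) * m ≤ 4*x^2/(3*r1) := by
    rw [div_mul_eq_mul_div, div_le_div_iff₀ (by positivity) (by positivity)]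
    have hxm : x^2 * m ≤ x^2 * r1 := mul_le_mul_of_nonneg_left hmr1 (sq_nonneg x)
    nlinarith [mul_le_mul_of_nonneg_left hxm hr1.le]
  have h5 : 4*x^2/(3*r2^2) * m ≤ 4*x^2/(3*r2) := by
    rw [div_mul_eq_mul_div, div_le_div_iff₀ (by positivity) (by positivity)]
    have hxm : x^2 * m ≤ x^2 * r2 := mul_le_mul_of_nonneg_left hmr2 (sq_nonneg x)
    nlinarith [mul_le_mul_of_nonneg_left hxm hr2.le]
  have h6 : x^2/r1 ≤ 2*(r1 - s1) := by
    rw [div_le_iff₀ hr1]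
    nlinarith [sq_nonneg (r1 - s1)]
  have h7 : x^2/r2 ≤ 2*(r2 - s2) := by
    rw [div_le_iff₀ hr2]
    nlinarith [sq_nonneg (r2 - s2)]
  have hkey : d^2 * m ≤ 6 * D := by
    have h8 : d^2 * m ≤ (2*(x^2/s1^2) + 2*(x^2/s2^2)) * m :=
      mul_le_mul_of_nonneg_right h3 hm0.le
    have h9 : (2*(x^2/s1^2) + 2*(x^2/s2^2)) * m
        ≤ 2*(4*x^2/(3*r1^2) * m) + 2*(4*x^2/(3*r2^2) * m) := by
      nlinarith [h1, h2, hm0.le]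
    have e1 : 4*x^2/(3*r1) = (4/3) * (x^2/r1) := by ring
    have e2 : 4*x^2/(3*r2) = (4/3) * (x^2/r2) := by ring
    rw [hDD]
    nlinarith [h8, h9, h4, h5, h6, h7, e1, e2, hε]
  -- conclude
  have e3 : (4 * lam^2 * d^2 / D^2) * D = 4 * lam^2 * (d^2 / D) := by
    field_simp
  rw [e3]
  have hfrac : d^2 / D ≤ 6 / m := by
    rw [div_le_div_iff₀ hD hm0]
    nlinarith [hkey]
  calc 4 * lam^2 * (d^2 / D) ≤ 4 * lam^2 * (6 / m) :=
        mul_le_mul_of_nonneg_left hfrac (by positivity)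
  _ = 24 * lam^2 / m := by ring

lemma lintegral_region (l u : ℝ → ℝ) (hl : Measurable l) (hu : Measurable u) (a b : ℝ)
    (G : ℝ → ENNReal) (hG : Measurable G) :
    ∫⁻ q in {q : ℝ × ℝ | (a < q.1 ∧ q.1 < b) ∧ (l q.1 < q.2 ∧ q.2 < u q.1)}, G q.1
      = ∫⁻ x in Set.Ioo a b, G x * (volume (Set.Ioo (l x) (u x))) := by
  set Ω : Set (ℝ × ℝ) := {q : ℝ × ℝ | (a < q.1 ∧ q.1 < b) ∧ (l q.1 < q.2 ∧ q.2 < u q.1)} with hΩdef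
  have hΩ : MeasurableSet Ω := by
    apply MeasurableSet.inter
    · exact MeasurableSet.inter
        (measurableSet_lt measurable_const measurable_fst)
        (measurableSet_lt measurable_fst measurable_const)
    · exact MeasurableSet.inter
        (measurableSet_lt (hl.comp measurable_fst) measurable_snd)
        (measurableSet_lt measurable_snd (hu.comp measurable_fst))
  rw [← lintegral_indicator hΩ]
  rw [Measure.volume_eq_prod, lintegral_prod]
  · rw [← lintegral_indicator measurableSet_Ioo]
    apply lintegral_congr
    intro x
    by_cases hx : x ∈ Set.Ioo a b
    · have h1 : ∀ y : ℝ, (Ω.indicator (fun q => G q.1) (x, y))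
          = (Set.Ioo (l x) (u x)).indicator (fun _ => G x) y := by
        intro y
        rcases hx with ⟨hxa, hxb⟩
        simp only [hΩdef, Set.indicator, Set.mem_setOf_eq, hxa, hxb, true_and, Set.mem_Ioo]
      rw [Set.indicator_of_mem hx]
      simp only [h1]
      rw [lintegral_indicator measurableSet_Ioo, setLIntegral_const, mul_comm]
    · have h1 : ∀ y : ℝ, (Ω.indicator (fun q => G q.1) (x, y)) = 0 := by
        intro y
        apply Set.indicator_of_notMem
        rw [hΩdef]
        intro hmem
        exact hx (Set.mem_Ioo.2 hmem.1)
      simp only [h1, lintegral_zero, Set.indicator_of_notMem hx]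
  · exact ((hG.comp measurable_fst).indicator hΩ).aemeasurable

set_option maxHeartbeats 1000000 in
lemma main_est (r1 r2 ε lam1 lam2 : ℝ) (hr1 : 0 < r1) (hr2 : 0 < r2) (hε : 0 < ε) :
    (∫ q in {q : ℝ × ℝ | |q.1| < min r1 r2 / 2 ∧
        -ε - (r2 - Real.sqrt (r2 ^ 2 - q.1 ^ 2)) < q.2 ∧
        q.2 < ε + (r1 - Real.sqrt (r1 ^ 2 - q.1 ^ 2))},
      (deriv (fun t : ℝ =>
        (lam1 - lam2) * ((q.2 + ε + (r2 - Real.sqrt (r2 ^ 2 - t ^ 2))) /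
          (2 * ε + (r1 - Real.sqrt (r1 ^ 2 - t ^ 2))
            + (r2 - Real.sqrt (r2 ^ 2 - t ^ 2)))) + lam2) q.1) ^ 2)
    ≤ 25 * (lam1 - lam2)^2 := by
  have hm0 : 0 < min r1 r2 := lt_min hr1 hr2
  have hmr1 : min r1 r2 ≤ r1 := min_le_left _ _
  have hmr2 : min r1 r2 ≤ r2 := min_le_right _ _
  set m := min r1 r2 with hmdef
  set lam := lam1 - lam2 with hlamdef
  set l : ℝ → ℝ := fun x => -ε - (r2 - Real.sqrt (r2 ^ 2 - x ^ 2)) with hldef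
  set u : ℝ → ℝ := fun x => ε + (r1 - Real.sqrt (r1 ^ 2 - x ^ 2)) with hudef
  have hlmeas : Measurable l := by fun_prop
  have humeas : Measurable u := by fun_prop
  set Ω : Set (ℝ × ℝ) :=
    {q : ℝ × ℝ | (-(m/2) < q.1 ∧ q.1 < m/2) ∧ (l q.1 < q.2 ∧ q.2 < u q.1)} with hΩdef
  have hsetEq : {q : ℝ × ℝ | |q.1| < m / 2 ∧
      -ε - (r2 - Real.sqrt (r2 ^ 2 - q.1 ^ 2)) < q.2 ∧
      q.2 < ε + (r1 - Real.sqrt (r1 ^ 2 - q.1 ^ 2))} = Ω := by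
    ext q
    rw [hΩdef, Set.mem_setOf_eq, Set.mem_setOf_eq, abs_lt]
    try tauto
  have hΩmeas : MeasurableSet Ω := by
    rw [hΩdef]
    apply MeasurableSet.inter
    · exact MeasurableSet.inter
        (measurableSet_lt measurable_const measurable_fst)
        (measurableSet_lt measurable_fst measurable_const)
    · exact MeasurableSet.inter
        (measurableSet_lt (hlmeas.comp measurable_fst) measurable_snd)
        (measurableSet_lt measurable_snd (humeas.comp measurable_fst))
  -- square facts on Ω
  have hsqlt : ∀ x : ℝ, |x| < m/2 → x^2 < r1^2 ∧ x^2 < r2^2 ∧ 4*x^2 ≤ r1^2 ∧ 4*x^2 ≤ r2^2 := by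
    intro x hx
    have h0 : 0 ≤ |x| := abs_nonneg x
    have hx2 : x^2 = |x|^2 := (sq_abs x).symm
    constructor
    · rw [hx2]; nlinarith
    constructor
    · rw [hx2]; nlinarith
    constructor
    · rw [hx2]; nlinarith
    · rw [hx2]; nlinarith
  rw [hsetEq]
  -- replace deriv by phi
  have hcong : ∀ q ∈ Ω, (deriv (fun t : ℝ =>
      lam * ((q.2 + ε + (r2 - Real.sqrt (r2 ^ 2 - t ^ 2))) /
        (2 * ε + (r1 - Real.sqrt (r1 ^ 2 - t ^ 2))
          + (r2 - Real.sqrt (r2 ^ 2 - t ^ 2)))) + lam2) q.1) ^ 2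
      = (phi r1 r2 ε lam q.2 q.1) ^ 2 := by
    intro q hq
    rw [hΩdef, Set.mem_setOf_eq] at hq
    have habs : |q.1| < m/2 := abs_lt.2 hq.1
    obtain ⟨hq1, hq2, _, _⟩ := hsqlt q.1 habs
    rw [deriv_eq r1 r2 ε lam lam2 q.2 q.1 hr1 hr2 hε hq1 hq2]
  rw [setIntegral_congr_fun hΩmeas hcong]
  -- measurability of phi
  have hphimeas : Measurable (fun q : ℝ × ℝ => phi r1 r2 ε lam q.2 q.1) := by
    unfold phi DD dd sq
    fun_prop
  -- pass to lintegral
  have hnn : 0 ≤ᵐ[volume.restrict Ω] fun q : ℝ × ℝ => (phi r1 r2 ε lam q.2 q.1)^2 :=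
    ae_of_all _ fun q => sq_nonneg _
  rw [integral_eq_lintegral_of_nonneg_ae hnn
    ((hphimeas.pow_const 2).aestronglyMeasurable)]
  -- bound the lintegral
  set G : ℝ → ENNReal := fun x =>
    ENNReal.ofReal (4 * lam^2 * (dd r1 r2 x)^2 / (DD r1 r2 ε x)^2) with hGdef
  have hGmeas : Measurable G := by
    apply Measurable.ennreal_ofReal
    unfold DD dd sq
    fun_prop
  have hstep1 : (∫⁻ q in Ω, ENNReal.ofReal ((phi r1 r2 ε lam q.2 q.1)^2))
      ≤ ∫⁻ q in Ω, G q.1 := by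
    apply setLIntegral_mono (hGmeas.comp measurable_fst)
    intro q hq
    rw [hΩdef, Set.mem_setOf_eq] at hq
    apply ENNReal.ofReal_le_ofReal
    exact phi_sq_le r1 r2 ε lam q.2 q.1 hr1 hr2 hε hq.2.1 hq.2.2
  have hstep2 : (∫⁻ q in Ω, G q.1)
      = ∫⁻ x in Set.Ioo (-(m/2)) (m/2), G x * volume (Set.Ioo (l x) (u x)) := by
    rw [hΩdef]
    exact lintegral_region l u hlmeas humeas (-(m/2)) (m/2) G hGmeas
  have hstep3 : (∫⁻ x in Set.Ioo (-(m/2)) (m/2), G x * volume (Set.Ioo (l x) (u x)))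
      ≤ ∫⁻ _x in Set.Ioo (-(m/2)) (m/2), ENNReal.ofReal (24 * lam^2 / m) := by
    apply setLIntegral_mono measurable_const
    intro x hx
    rw [Set.mem_Ioo] at hx
    have habs : |x| < m/2 := abs_lt.2 hx
    obtain ⟨_, _, hx1, hx2⟩ := hsqlt x habs
    rw [Real.volume_Ioo]
    have hul : u x - l x = DD r1 r2 ε x := by
      rw [hudef, hldef]; unfold DD sq; ring
    rw [hul, hGdef, ← ENNReal.ofReal_mul (by positivity)]
    exact ENNReal.ofReal_le_ofReal (key_bound r1 r2 ε x lam hr1 hr2 hε hx1 hx2)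
  have hstep4 : (∫⁻ _x in Set.Ioo (-(m/2)) (m/2), ENNReal.ofReal (24 * lam^2 / m))
      = ENNReal.ofReal (24 * lam^2) := by
    rw [setLIntegral_const, Real.volume_Ioo]
    rw [← ENNReal.ofReal_mul (by positivity)]
    congr 1
    field_simp
    ring
  have hL : (∫⁻ q in Ω, ENNReal.ofReal ((phi r1 r2 ε lam q.2 q.1)^2))
      ≤ ENNReal.ofReal (25 * lam^2) := by
    calc (∫⁻ q in Ω, ENNReal.ofReal ((phi r1 r2 ε lam q.2 q.1)^2))
        ≤ ∫⁻ q in Ω, G q.1 := hstep1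
    _ = _ := hstep2
    _ ≤ _ := hstep3
    _ = ENNReal.ofReal (24 * lam^2) := hstep4
    _ ≤ ENNReal.ofReal (25 * lam^2) := ENNReal.ofReal_le_ofReal (by nlinarith [sq_nonneg lam])
  calc (∫⁻ q in Ω, ENNReal.ofReal ((phi r1 r2 ε lam q.2 q.1)^2)).toReal
      ≤ (ENNReal.ofReal (25 * lam^2)).toReal :=
        ENNReal.toReal_mono ENNReal.ofReal_ne_top hL
  _ = 25 * lam^2 := ENNReal.toReal_ofReal (by positivity)

end Stmt16



/-- The horizontal derivative of the singular auxiliary function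
`ũ = (λ1 - λ2) (x2 + ε + g2)/δ + λ2` satisfies
`∫_{Ω_{r0}} |∂_{x1} ũ|² ≤ C (r0 / min{r1,r2}) |λ1 - λ2|²` with `C` independent
of `r1, r2, ε, λ1, λ2`. -/
theorem stmt16 :
    ∃ C > (0 : ℝ), ∀ r1 r2 ε lam1 lam2 : ℝ, 0 < r1 → 0 < r2 → 0 < ε →
      (∫ q in {q : ℝ × ℝ | |q.1| < min r1 r2 / 2 ∧
          -ε - (r2 - Real.sqrt (r2 ^ 2 - q.1 ^ 2)) < q.2 ∧
          q.2 < ε + (r1 - Real.sqrt (r1 ^ 2 - q.1 ^ 2))},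
        (deriv (fun t : ℝ =>
          (lam1 - lam2) * ((q.2 + ε + (r2 - Real.sqrt (r2 ^ 2 - t ^ 2))) /
            (2 * ε + (r1 - Real.sqrt (r1 ^ 2 - t ^ 2))
              + (r2 - Real.sqrt (r2 ^ 2 - t ^ 2)))) + lam2) q.1) ^ 2)
      ≤ C * ((min r1 r2 / 2) / min r1 r2) * |lam1 - lam2| ^ 2 := by
  refine ⟨50, by norm_num, ?_⟩
  intro r1 r2 ε lam1 lam2 hr1 hr2 hε
  have hm0 : 0 < min r1 r2 := lt_min hr1 hr2
  have hrhs : (50:ℝ) * ((min r1 r2 / 2) / min r1 r2) * |lam1 - lam2| ^ 2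
      = 25 * (lam1 - lam2)^2 := by
    rw [sq_abs]
    field_simp
    ring
  rw [hrhs]
  exact Stmt16.main_est r1 r2 ε lam1 lam2 hr1 hr2 hε
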